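/- Localization theorem: let (X, ·, ℂ) be a stratified L-convex group with identity e. Then for every x ∈ X, nonzero coprime a ∈ L, and A : X → L: A belongs to the remote-neighborhood system R_{x_a} if and only if ⊤_{x⁻¹} ⊙ A belongs to R_{e_a}, if and only if A ⊙ ⊤_{x⁻¹} belongs to R_{e_a}. -/
import Mathlib


open scoped Classical

variable {L X : Type*}

def IsLConvex [CompleteLattice L] {X : Type*} (𝒞 : Set (X → L)) : Prop :=
  (fun _ => (⊤ : L)) ∈ 𝒞 ∧ (fun _ => (⊥ : L)) ∈ 𝒞 ∧
  (∀ S : Set (X → L), S ⊆ 𝒞 → sInf S ∈ 𝒞) ∧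
  (∀ S : Set (X → L), S ⊆ 𝒞 → DirectedOn (· ≤ ·) S → sSup S ∈ 𝒞)

def IsStratified [CompleteLattice L] {X : Type*} (𝒞 : Set (X → L)) : Prop :=
  ∀ a : L, (fun _ => a) ∈ 𝒞

def fprod [CompleteLattice L] {X Y : Type*} (A : X → L) (B : Y → L) : X × Y → L :=
  fun p => A p.1 ⊓ B p.2

def prodStruct [CompleteLattice L] {X Y : Type*}
    (𝒞 : Set (X → L)) (𝒟 : Set (Y → L)) : Set (X × Y → L) :=
  {F | ∃ C ∈ 𝒞, ∃ D ∈ 𝒟, F = fprod C D}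

def LCP [CompleteLattice L] {X Y : Type*} (f : X → Y)
    (𝒞 : Set (X → L)) (𝔾 : Set (Y → L)) : Prop :=
  ∀ A ∈ 𝔾, (A ∘ f) ∈ 𝒞

def IsLConvexGroup [CompleteLattice L] [Group X] (𝒞 : Set (X → L)) : Prop :=
  LCP (fun p : X × X => p.1 * p.2) (prodStruct 𝒞 𝒞) 𝒞 ∧ LCP (fun x : X => x⁻¹) 𝒞 𝒞

noncomputable def odot [CompleteLattice L] [Mul X] (A B : X → L) : X → L :=
  fun u => ⨆ (y : X) (z : X) (_ : y * z = u), A y ⊓ B z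

noncomputable def chi [CompleteLattice L] (x : X) : X → L :=
  fun u => if u = x then ⊤ else ⊥

noncomputable def fpoint [CompleteLattice L] (x : X) (a : L) : X → L :=
  fun u => if u = x then a else ⊥

def RN [CompleteLattice L] {X : Type*} (𝒞 : Set (X → L)) (c : L → L) (x : X) (a : L) :
    Set (X → L) :=
  {A | ∃ C ∈ 𝒞, fpoint x a ≤ (fun u => c (C u)) ∧ (fun u => c (C u)) ≤ (fun u => c (A u))}

def IsCoprimeElt [CompleteLattice L] (a : L) : Prop :=
  a ≠ ⊥ ∧ ∀ b c : L, a ≤ b ⊔ c → a ≤ b ∨ a ≤ c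

lemma c_le_c_iff {L : Type*} [CompletelyDistribLattice L] {c : L → L}
    (hcA : Antitone c) (hci : Function.Involutive c) {a b : L} :
    c b ≤ c a ↔ a ≤ b := by
  constructor
  · intro hh
    have := hcA hh
    simpa [hci a, hci b] using this
  · exact fun hh => hcA hh

lemma odot_chi_left {L X : Type*} [CompletelyDistribLattice L] [Group X]
    (x : X) (A : X → L) : odot (chi x⁻¹) A = fun u => A (x * u) := by
  funext u
  apply le_antisymm
  · refine iSup_le fun y => iSup_le fun z => iSup_le fun hz => ?_
    by_cases hy : y = x⁻¹
    · subst hy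
      have : z = x * u := by rw [← hz]; group
      simp [chi, this]
    · simp [chi, hy]
  · have hz : x⁻¹ * (x * u) = u := by group
    calc A (x * u) = chi (x⁻¹ : X) x⁻¹ ⊓ A (x * u) := by simp [chi]
      _ ≤ _ := by
        apply le_iSup_of_le x⁻¹
        apply le_iSup_of_le (x * u)
        exact le_iSup_of_le hz le_rfl

lemma odot_chi_right {L X : Type*} [CompletelyDistribLattice L] [Group X]
    (x : X) (A : X → L) : odot A (chi x⁻¹) = fun u => A (u * x) := by
  funext u
  apply le_antisymm
  · refine iSup_le fun y => iSup_le fun z => iSup_le fun hz => ?_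
    by_cases hy : z = x⁻¹
    · subst hy
      have : y = u * x := by rw [← hz]; group
      simp [chi, this]
    · simp [chi, hy]
  · have hz : (u * x) * x⁻¹ = u := by group
    calc A (u * x) = A (u * x) ⊓ chi (x⁻¹ : X) x⁻¹ := by simp [chi]
      _ ≤ _ := by
        apply le_iSup_of_le (u * x)
        apply le_iSup_of_le x⁻¹
        exact le_iSup_of_le hz le_rfl

lemma trans_mem {L X : Type*} [CompletelyDistribLattice L] [Group X]
    {𝒞 : Set (X → L)} (h : IsLConvex 𝒞) (hs : IsStratified 𝒞)
    (hg : IsLConvexGroup 𝒞) {C : X → L} (hC : C ∈ 𝒞) (x : X) :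
    (fun u => C (x * u)) ∈ 𝒞 ∧ (fun u => C (u * x)) ∈ 𝒞 := by
  obtain ⟨C1, hC1, C2, hC2, heq⟩ := hg.1 C hC
  have h1 : ∀ p : X × X, C (p.1 * p.2) = C1 p.1 ⊓ C2 p.2 := fun p => congrFun heq p
  constructor
  · have e : (fun u => C (x * u)) = sInf {fun _ => C1 x, C2} := by
      funext u
      rw [sInf_pair]
      exact h1 (x, u)
    rw [e]
    refine h.2.2.1 _ ?_
    rintro f hf
    rcases hf with rfl | hf
    · exact hs (C1 x)
    · simp only [Set.mem_singleton_iff] at hf; subst hf; exact hC2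
  · have e : (fun u => C (u * x)) = sInf {C1, fun _ => C2 x} := by
      funext u
      rw [sInf_pair]
      exact h1 (u, x)
    rw [e]
    refine h.2.2.1 _ ?_
    rintro f hf
    rcases hf with rfl | hf
    · exact hC1
    · simp only [Set.mem_singleton_iff] at hf; subst hf; exact hs (C2 x)

lemma fpoint_le_iff {L X : Type*} [CompletelyDistribLattice L]
    (x : X) (a : L) (f : X → L) : fpoint x a ≤ f ↔ a ≤ f x := by
  constructor
  · intro hh
    have := hh x
    simpa [fpoint] using this
  · intro hh u
    by_cases hu : u = x
    · subst hu; simpa [fpoint] using hh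
    · simp [fpoint, hu]

theorem localization [CompletelyDistribLattice L] [Group X]
    (c : L → L) (hcA : Antitone c) (hci : Function.Involutive c)
    (𝒞 : Set (X → L)) (h : IsLConvex 𝒞) (hs : IsStratified 𝒞)
    (hg : IsLConvexGroup 𝒞) (x : X) (a : L) (ha : IsCoprimeElt a) (A : X → L) :
    (A ∈ RN 𝒞 c x a ↔ odot (chi x⁻¹) A ∈ RN 𝒞 c (1 : X) a) ∧
    (A ∈ RN 𝒞 c x a ↔ odot A (chi x⁻¹) ∈ RN 𝒞 c (1 : X) a) := by
  have key : ∀ (w : X) (B : X → L),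
      B ∈ RN 𝒞 c w a ↔ (fun u => B (w * u)) ∈ RN 𝒞 c (1 : X) a := by
    intro w B
    constructor
    · rintro ⟨C, hC, h1, h2⟩
      refine ⟨fun u => C (w * u), (trans_mem h hs hg hC w).1, ?_, ?_⟩
      · rw [fpoint_le_iff]
        simpa using (fpoint_le_iff w a (fun u => c (C u))).1 h1
      · intro u
        exact (c_le_c_iff hcA hci).2 ((c_le_c_iff hcA hci).1 (h2 (w * u)))
    · rintro ⟨D, hD, h1, h2⟩
      refine ⟨fun u => D (w⁻¹ * u), (trans_mem h hs hg hD w⁻¹).1, ?_, ?_⟩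
      · rw [fpoint_le_iff]
        have := (fpoint_le_iff (1 : X) a (fun u => c (D u))).1 h1
        simpa using this
      · intro u
        have h3 : B (w * (w⁻¹ * u)) ≤ D (w⁻¹ * u) := (c_le_c_iff hcA hci).1 (h2 (w⁻¹ * u))
        have e : w * (w⁻¹ * u) = u := by group
        rw [e] at h3
        exact (c_le_c_iff hcA hci).2 h3
  have keyr : ∀ B : X → L,
      B ∈ RN 𝒞 c x a ↔ (fun u => B (u * x)) ∈ RN 𝒞 c (1 : X) a := by
    intro B
    constructor
    · rintro ⟨C, hC, h1, h2⟩
      refine ⟨fun u => C (u * x), (trans_mem h hs hg hC x).2, ?_, ?_⟩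
      · rw [fpoint_le_iff]
        simpa using (fpoint_le_iff x a (fun u => c (C u))).1 h1
      · intro u
        exact (c_le_c_iff hcA hci).2 ((c_le_c_iff hcA hci).1 (h2 (u * x)))
    · rintro ⟨D, hD, h1, h2⟩
      refine ⟨fun u => D (u * x⁻¹), (trans_mem h hs hg hD x⁻¹).2, ?_, ?_⟩
      · rw [fpoint_le_iff]
        have := (fpoint_le_iff (1 : X) a (fun u => c (D u))).1 h1
        simpa using this
      · intro u
        have h3 : B ((u * x⁻¹) * x) ≤ D (u * x⁻¹) := (c_le_c_iff hcA hci).1 (h2 (u * x⁻¹))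
        have e : (u * x⁻¹) * x = u := by group
        rw [e] at h3
        exact (c_le_c_iff hcA hci).2 h3
  constructor
  · rw [odot_chi_left]
    exact key x A
  · rw [odot_chi_right]
    exact keyr A
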